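/- With the parallel oracle model and adversary matrix setup below, let δ : S → ℝ be a unit vector with nonnegative entries, and for each x ∈ S let φ_x ∈ H be a unit vector. Then | Σ_{x,y ∈ S} Γ_{xy} δ_x δ_y ( ⟨φ_x, φ_y⟩ − ⟨O_x^{⊗p} φ_x, O_y^{⊗p} φ_y⟩ ) | ≤ 2 · max over tuples (i₁,…,i_p) ∈ (Fin N)^p of λ(Γ^{i₁⋯i_p}). In words: a single round of p parallel oracle queries can change the adversary progress measure by at most twice the largest spectral norm of the zeroed-out matrices Γ^{i₁⋯i_p}. -/

import Mathlib

/-- Basis index for the algorithm's Hilbert space: `p` query registers over `Fin N`,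
`p` result bits, and a workspace register `Fin d`. -/
abbrev QIdx (N p d : ℕ) := (Fin p → Fin N) × (Fin p → Bool) × Fin d

/-- The `p`-parallel oracle unitary for the oracle string `x : Fin N → Bool`, as a matrix:
`|i₁,…,i_p; b₁,…,b_p; w⟩ ↦ |i₁,…,i_p; b₁ ⊕ x_{i₁}, …, b_p ⊕ x_{i_p}; w⟩`. -/
def oracleMatrix {N p d : ℕ} (x : Fin N → Bool) : Matrix (QIdx N p d) (QIdx N p d) ℂ :=
  Matrix.of fun k k' =>
    if k.1 = k'.1 ∧ k.2.2 = k'.2.2 ∧ (∀ j, k.2.1 j = xor (k'.2.1 j) (x (k'.1 j)))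
    then 1 else 0

/-- The spectral norm (operator 2-norm) of a matrix over `𝕜`. -/
noncomputable def specNorm {𝕜 : Type*} [RCLike 𝕜] {m n : Type*} [Fintype m] [Fintype n]
    [DecidableEq n] (A : Matrix m n 𝕜) : ℝ :=
  ‖LinearMap.toContinuousLinearMap (Matrix.toEuclideanLin A)‖

/-- The adversary matrix `Γ^{i₁⋯i_p}`: entries of `Γ` are kept where the two oracles
disagree on some queried position `i_j`, and zeroed out elsewhere. -/
def zeroedOut {S : Type*} {N p : ℕ} (x : S → Fin N → Bool) (Γ : Matrix S S ℝ)
    (i : Fin p → Fin N) : Matrix S S ℝ :=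
  Matrix.of fun a b => if ∃ j, x a (i j) ≠ x b (i j) then Γ a b else 0

/-! ### Auxiliary material -/

open scoped RealInnerProductSpace

lemma specNorm_nonneg' {𝕜 : Type*} [RCLike 𝕜] {m n : Type*} [Fintype m] [Fintype n]
    [DecidableEq n] (A : Matrix m n 𝕜) : 0 ≤ specNorm A := norm_nonneg _

lemma sum_comm3' {α β γ M : Type*} [AddCommMonoid M] [Fintype α] [Fintype β] [Fintype γ]
    (f : α → β → γ → M) :
    ∑ a, ∑ b, ∑ c, f a b c = ∑ c, ∑ a, ∑ b, f a b c := by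
  rw [show (∑ a, ∑ b, ∑ c, f a b c) = ∑ a, ∑ c, ∑ b, f a b c from
    Finset.sum_congr rfl fun _ _ => Finset.sum_comm, Finset.sum_comm]

lemma quad_bound' {S : Type*} [Fintype S] [DecidableEq S] (M : Matrix S S ℝ) (t : S → ℝ) :
    |∑ a, ∑ b, M a b * t a * t b| ≤ specNorm M * ∑ a, t a ^ 2 := by
  classical
  set v : EuclideanSpace ℝ S := (WithLp.equiv 2 (S → ℝ)).symm t with hv
  set w : EuclideanSpace ℝ S := LinearMap.toContinuousLinearMap (Matrix.toEuclideanLin M) v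
    with hw
  have hwk : ∀ a, w a = ∑ b, M a b * t b := by
    intro a
    have : w = Matrix.toEuclideanLin M v := rfl
    rw [this, Matrix.toEuclideanLin_apply]
    simp [Matrix.mulVec, dotProduct, hv]
  have hinner : ∑ a, ∑ b, M a b * t a * t b = ⟪v, w⟫ := by
    rw [PiLp.inner_apply]
    simp only [RCLike.inner_apply', conj_trivial, hwk]
    refine Finset.sum_congr rfl fun a _ => ?_
    rw [Finset.mul_sum]
    refine Finset.sum_congr rfl fun b _ => ?_
    have : v a = t a := rfl
    rw [this]; ring
  have hnv : ‖v‖ ^ 2 = ∑ a, t a ^ 2 := by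
    rw [EuclideanSpace.norm_eq, Real.sq_sqrt (by positivity)]
    refine Finset.sum_congr rfl fun a _ => ?_
    rw [show v a = t a from rfl, Real.norm_eq_abs, sq_abs]
  calc |∑ a, ∑ b, M a b * t a * t b| = |⟪v, w⟫| := by rw [hinner]
    _ ≤ ‖v‖ * ‖w‖ := abs_real_inner_le_norm v w
    _ ≤ ‖v‖ * (specNorm M * ‖v‖) := by
        refine mul_le_mul_of_nonneg_left ?_ (norm_nonneg v)
        exact (LinearMap.toContinuousLinearMap (Matrix.toEuclideanLin M)).le_opNorm v
    _ = specNorm M * ‖v‖ ^ 2 := by ring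
    _ = specNorm M * ∑ a, t a ^ 2 := by rw [hnv]

lemma gram_bound' {S K : Type*} [Fintype S] [DecidableEq S] [Fintype K]
    (M : Matrix S S ℝ) (hM : M.IsSymm) (u : S → K → ℂ) :
    ‖∑ a, ∑ b, (M a b : ℂ) * ∑ k, (starRingEnd ℂ) (u a k) * u b k‖ ≤
      specNorm M * ∑ a, ∑ k, ‖u a k‖ ^ 2 := by
  classical
  set T := ∑ a, ∑ b, (M a b : ℂ) * ∑ k, (starRingEnd ℂ) (u a k) * u b k with hT
  have hexp : ∀ a b : S, (M a b : ℂ) * ∑ k, (starRingEnd ℂ) (u a k) * u b k =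
      ∑ k, (M a b : ℂ) * ((starRingEnd ℂ) (u a k) * u b k) := fun a b => Finset.mul_sum _ _ _
  have hre1 : ∀ (a b : S) (k : K), ((M a b : ℂ) * ((starRingEnd ℂ) (u a k) * u b k)).re =
      M a b * ((u a k).re * (u b k).re) + M a b * ((u a k).im * (u b k).im) := by
    intro a b k
    simp [Complex.mul_re, Complex.mul_im]
    ring
  have him1 : ∀ (a b : S) (k : K), ((M a b : ℂ) * ((starRingEnd ℂ) (u a k) * u b k)).im =
      M a b * (u a k).re * (u b k).im - M a b * (u a k).im * (u b k).re := by
    intro a b k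
    simp [Complex.mul_re, Complex.mul_im]
    ring
  have key : ∀ (r s : S → ℝ), ∑ a, ∑ b, M a b * r a * s b = ∑ a, ∑ b, M a b * s a * r b := by
    intro r s
    rw [Finset.sum_comm]
    refine Finset.sum_congr rfl fun a _ => Finset.sum_congr rfl fun b _ => ?_
    have hs : M b a = M a b := congrFun (congrFun hM a) b
    rw [hs]; ring
  have hre : T.re = ∑ k, ((∑ a, ∑ b, M a b * ((u a k).re * (u b k).re)) +
      (∑ a, ∑ b, M a b * ((u a k).im * (u b k).im))) := by
    rw [hT, Complex.re_sum]
    simp_rw [Complex.re_sum, hexp, Complex.re_sum, hre1]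
    rw [sum_comm3']
    refine Finset.sum_congr rfl fun k _ => ?_
    rw [← Finset.sum_add_distrib]
    refine Finset.sum_congr rfl fun a _ => ?_
    rw [← Finset.sum_add_distrib]
  have him : T.im = 0 := by
    rw [hT, Complex.im_sum]
    simp_rw [Complex.im_sum, hexp, Complex.im_sum, him1]
    rw [sum_comm3']
    refine Finset.sum_eq_zero fun k _ => ?_
    simp_rw [Finset.sum_sub_distrib]
    rw [key (fun a => (u a k).re) (fun a => (u a k).im)]
    ring
  have hTeq : T = ((T.re : ℝ) : ℂ) := by
    apply Complex.ext <;> simp [him]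
  have hnorm : ‖T‖ = |T.re| := by
    rw [hTeq]
    simp [Complex.norm_real]
  rw [hnorm, hre]
  have hsq : ∀ (a : S) (k : K), ‖u a k‖ ^ 2 = (u a k).re ^ 2 + (u a k).im ^ 2 := by
    intro a k
    rw [Complex.sq_norm, Complex.normSq_apply]
    ring
  calc |∑ k, ((∑ a, ∑ b, M a b * ((u a k).re * (u b k).re)) +
      (∑ a, ∑ b, M a b * ((u a k).im * (u b k).im)))|
      ≤ ∑ k, |(∑ a, ∑ b, M a b * ((u a k).re * (u b k).re)) +
        (∑ a, ∑ b, M a b * ((u a k).im * (u b k).im))| := Finset.abs_sum_le_sum_abs _ _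
    _ ≤ ∑ k, (specNorm M * (∑ a, (u a k).re ^ 2) + specNorm M * (∑ a, (u a k).im ^ 2)) := by
        refine Finset.sum_le_sum fun k _ => ?_
        refine (abs_add_le _ _).trans (add_le_add ?_ ?_)
        · have := quad_bound' M (fun a => (u a k).re)
          simpa [mul_assoc] using this
        · have := quad_bound' M (fun a => (u a k).im)
          simpa [mul_assoc] using this
    _ = specNorm M * ∑ k, ∑ a, ((u a k).re ^ 2 + (u a k).im ^ 2) := by
        rw [Finset.mul_sum]
        refine Finset.sum_congr rfl fun k _ => ?_
        rw [← mul_add, ← Finset.sum_add_distrib]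
    _ = specNorm M * ∑ a, ∑ k, ‖u a k‖ ^ 2 := by
        rw [Finset.sum_comm]
        congr 1
        exact Finset.sum_congr rfl fun a _ => Finset.sum_congr rfl fun k _ => (hsq a k).symm

/-- the permutation of basis indices performed by the oracle -/
def sig {N p d : ℕ} (x : Fin N → Bool) (k : QIdx N p d) : QIdx N p d :=
  (k.1, fun j => xor (k.2.1 j) (x (k.1 j)), k.2.2)

lemma oracleMatrix_eq {N p d : ℕ} (x : Fin N → Bool) (k k' : QIdx N p d) :
    oracleMatrix (d:=d) x k k' = if k' = sig x k then 1 else 0 := by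
  unfold oracleMatrix
  simp only [Matrix.of_apply]
  congr 1
  simp only [eq_iff_iff]
  constructor
  · rintro ⟨h1, h2, h3⟩
    obtain ⟨i1, b1, w1⟩ := k
    obtain ⟨i2, b2, w2⟩ := k'
    simp_all only [sig]
    subst h1 h2
    refine Prod.ext rfl (Prod.ext ?_ rfl)
    funext j
    have := h3 j
    rcases hb : b2 j with _|_ <;> rcases hx : x (i1 j) with _|_ <;> simp_all
  · rintro rfl
    refine ⟨rfl, rfl, fun j => ?_⟩
    simp [sig, Bool.xor_assoc]

lemma oracle_apply {N p d : ℕ} (x : Fin N → Bool) (φ : EuclideanSpace ℂ (QIdx N p d))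
    (k : QIdx N p d) :
    Matrix.toEuclideanCLM (𝕜 := ℂ) (oracleMatrix x) φ k = φ (sig x k) := by
  classical
  have h2 := congrFun (Matrix.ofLp_toEuclideanCLM (𝕜 := ℂ)
    (oracleMatrix (N:=N) (p:=p) (d:=d) x) φ) k
  rw [h2]
  simp only [Matrix.toLin'_apply, Matrix.mulVec, dotProduct]
  rw [Finset.sum_eq_single (sig x k)]
  · simp [oracleMatrix_eq]
  · intro b _ hb
    simp [oracleMatrix_eq, hb]
  · intro h
    exact absurd (Finset.mem_univ _) h

/-- flipping the result bits by a fixed pattern, as a permutation -/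
def flipE {p d : ℕ} (z : Fin p → Bool) : ((Fin p → Bool) × Fin d) ≃ ((Fin p → Bool) × Fin d) :=
  Function.Involutive.toPerm (fun r => (fun j => xor (r.1 j) (z j), r.2)) (by
    intro r
    simp [Bool.xor_assoc])

lemma sig_eq_flip {N p d : ℕ} (x : Fin N → Bool) (i : Fin p → Fin N)
    (r : (Fin p → Bool) × Fin d) :
    sig x (i, r) = (i, flipE (fun j => x (i j)) r) := rfl

lemma zeroedOut_isSymm {S : Type*} {N p : ℕ} (x : S → Fin N → Bool) (Γ : Matrix S S ℝ)
    (hsym : Γ.IsSymm) (i : Fin p → Fin N) : (zeroedOut x Γ i).IsSymm := by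
  classical
  apply Matrix.IsSymm.ext
  intro a b
  unfold zeroedOut
  simp only [Matrix.of_apply]
  have hcond : (∃ j, x b (i j) ≠ x a (i j)) ↔ (∃ j, x a (i j) ≠ x b (i j)) :=
    ⟨fun ⟨j, h⟩ => ⟨j, h.symm⟩, fun ⟨j, h⟩ => ⟨j, h.symm⟩⟩
  rw [if_congr hcond rfl rfl, hsym.apply a b]

theorem progress_measure_step_bound
    {S : Type*} [Fintype S] [DecidableEq S] {N p d : ℕ}
    (x : S → Fin N → Bool)
    (Γ : Matrix S S ℝ) (hsym : Γ.IsSymm) (hnn : ∀ a b, 0 ≤ Γ a b)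
    (δ : S → ℝ) (hδnn : ∀ a, 0 ≤ δ a) (hδ : ∑ a, δ a ^ 2 = 1)
    (φ : S → EuclideanSpace ℂ (QIdx N p d)) (hφ : ∀ a, ‖φ a‖ = 1) :
    ‖∑ a : S, ∑ b : S, ((Γ a b * δ a * δ b : ℝ) : ℂ) *
        (inner ℂ (φ a) (φ b) -
          inner ℂ (Matrix.toEuclideanCLM (𝕜 := ℂ) (oracleMatrix (x a)) (φ a))
                (Matrix.toEuclideanCLM (𝕜 := ℂ) (oracleMatrix (x b)) (φ b)))‖ ≤
      2 * ⨆ i : Fin p → Fin N, specNorm (zeroedOut x Γ i) := by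
  classical
  have hsup0 : (0:ℝ) ≤ ⨆ i : Fin p → Fin N, specNorm (zeroedOut x Γ i) :=
    Real.iSup_nonneg fun i => specNorm_nonneg' _
  by_cases hS : Nonempty S
  swap
  · rw [not_nonempty_iff] at hS
    rw [Finset.univ_eq_empty, Finset.sum_empty, norm_zero]
    linarith
  obtain ⟨a₀⟩ := hS
  -- the index space is nonempty
  have hKne : Nonempty (QIdx N p d) := by
    by_contra h
    rw [not_nonempty_iff] at h
    have h1 := hφ a₀
    rw [EuclideanSpace.norm_eq] at h1
    simp at h1
  have hIne : Nonempty (Fin p → Fin N) := ⟨hKne.some.1⟩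
  set R := (Fin p → Bool) × Fin d with hR
  set σ : ℝ := ⨆ i : Fin p → Fin N, specNorm (zeroedOut x Γ i) with hσ
  have hsup_le : ∀ i : Fin p → Fin N, specNorm (zeroedOut x Γ i) ≤ σ := fun i =>
    le_ciSup (f := fun i => specNorm (zeroedOut x Γ i)) (Set.Finite.bddAbove (Set.finite_range _)) i
  -- the vectors entering the Gram bounds
  set u : (Fin p → Fin N) → S → R → ℂ := fun i a r => (δ a : ℂ) * φ a (i, r) with hu
  set v : (Fin p → Fin N) → S → R → ℂ := fun i a r => (δ a : ℂ) * φ a (sig (x a) (i, r)) with hv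
  -- step 1: the progress difference splits over query tuples
  have hsplit : ∑ a : S, ∑ b : S, ((Γ a b * δ a * δ b : ℝ) : ℂ) *
        (inner ℂ (φ a) (φ b) -
          inner ℂ (Matrix.toEuclideanCLM (𝕜 := ℂ) (oracleMatrix (x a)) (φ a))
                (Matrix.toEuclideanCLM (𝕜 := ℂ) (oracleMatrix (x b)) (φ b))) =
      ∑ i : Fin p → Fin N,
        ((∑ a, ∑ b, ((zeroedOut x Γ i a b : ℝ) : ℂ) * ∑ r : R, (starRingEnd ℂ) (u i a r) * u i b r) -
         (∑ a, ∑ b, ((zeroedOut x Γ i a b : ℝ) : ℂ) * ∑ r : R, (starRingEnd ℂ) (v i a r) * v i b r)) := by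
    have hA : ∀ a b : S, (inner ℂ (φ a) (φ b) : ℂ) =
        ∑ i : Fin p → Fin N, ∑ r : R, (starRingEnd ℂ) (φ a (i, r)) * φ b (i, r) := by
      intro a b
      rw [PiLp.inner_apply]
      simp_rw [RCLike.inner_apply']
      exact Fintype.sum_prod_type _
    have hB : ∀ a b : S, (inner ℂ (Matrix.toEuclideanCLM (𝕜 := ℂ) (oracleMatrix (x a)) (φ a))
          (Matrix.toEuclideanCLM (𝕜 := ℂ) (oracleMatrix (x b)) (φ b)) : ℂ) =
        ∑ i : Fin p → Fin N, ∑ r : R,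
          (starRingEnd ℂ) (φ a (sig (x a) (i, r))) * φ b (sig (x b) (i, r)) := by
      intro a b
      rw [PiLp.inner_apply]
      simp_rw [RCLike.inner_apply', oracle_apply]
      exact Fintype.sum_prod_type _
    calc ∑ a : S, ∑ b : S, ((Γ a b * δ a * δ b : ℝ) : ℂ) *
        (inner ℂ (φ a) (φ b) -
          inner ℂ (Matrix.toEuclideanCLM (𝕜 := ℂ) (oracleMatrix (x a)) (φ a))
                (Matrix.toEuclideanCLM (𝕜 := ℂ) (oracleMatrix (x b)) (φ b)))
        = ∑ a : S, ∑ b : S, ∑ i : Fin p → Fin N, ((Γ a b * δ a * δ b : ℝ) : ℂ) *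
            ((∑ r : R, (starRingEnd ℂ) (φ a (i, r)) * φ b (i, r)) -
             (∑ r : R, (starRingEnd ℂ) (φ a (sig (x a) (i, r))) * φ b (sig (x b) (i, r)))) := by
          refine Finset.sum_congr rfl fun a _ => Finset.sum_congr rfl fun b _ => ?_
          rw [hA, hB, ← Finset.sum_sub_distrib, Finset.mul_sum]
      _ = ∑ i : Fin p → Fin N, ∑ a : S, ∑ b : S, ((Γ a b * δ a * δ b : ℝ) : ℂ) *
            ((∑ r : R, (starRingEnd ℂ) (φ a (i, r)) * φ b (i, r)) -
             (∑ r : R, (starRingEnd ℂ) (φ a (sig (x a) (i, r))) * φ b (sig (x b) (i, r)))) :=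
          sum_comm3' _
      _ = ∑ i : Fin p → Fin N,
        ((∑ a, ∑ b, ((zeroedOut x Γ i a b : ℝ) : ℂ) * ∑ r : R, (starRingEnd ℂ) (u i a r) * u i b r) -
         (∑ a, ∑ b, ((zeroedOut x Γ i a b : ℝ) : ℂ) * ∑ r : R, (starRingEnd ℂ) (v i a r) * v i b r)) := by
          refine Finset.sum_congr rfl fun i _ => ?_
          rw [← Finset.sum_sub_distrib]
          refine Finset.sum_congr rfl fun a _ => ?_
          rw [← Finset.sum_sub_distrib]
          refine Finset.sum_congr rfl fun b _ => ?_
          have hu' : ∑ r : R, (starRingEnd ℂ) (u i a r) * u i b r =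
              ((δ a * δ b : ℝ) : ℂ) * ∑ r : R, (starRingEnd ℂ) (φ a (i, r)) * φ b (i, r) := by
            rw [Finset.mul_sum]
            refine Finset.sum_congr rfl fun r _ => ?_
            simp only [hu, map_mul, Complex.conj_ofReal]
            push_cast
            ring
          have hv' : ∑ r : R, (starRingEnd ℂ) (v i a r) * v i b r =
              ((δ a * δ b : ℝ) : ℂ) *
                ∑ r : R, (starRingEnd ℂ) (φ a (sig (x a) (i, r))) * φ b (sig (x b) (i, r)) := by
            rw [Finset.mul_sum]
            refine Finset.sum_congr rfl fun r _ => ?_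
            simp only [hv, map_mul, Complex.conj_ofReal]
            push_cast
            ring
          by_cases hd : ∃ j, x a (i j) ≠ x b (i j)
          · have hZ : zeroedOut x Γ i a b = Γ a b := by simp [zeroedOut, hd]
            rw [hu', hv', hZ]
            push_cast
            ring
          · have hZ : zeroedOut x Γ i a b = 0 := by simp [zeroedOut, hd]
            push_neg at hd
            have hsigeq : ∀ r : R, sig (x b) (i, r) = sig (x a) (i, r) := by
              intro r
              unfold sig
              simp only
              rw [show (fun j => xor (r.1 j) (x b (i j))) =
                (fun j => xor (r.1 j) (x a (i j))) from funext fun j => by rw [hd j]]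
            have hBA : ∑ r : R, (starRingEnd ℂ) (φ a (sig (x a) (i, r))) * φ b (sig (x b) (i, r)) =
                ∑ r : R, (starRingEnd ℂ) (φ a (i, r)) * φ b (i, r) := by
              calc ∑ r : R, (starRingEnd ℂ) (φ a (sig (x a) (i, r))) * φ b (sig (x b) (i, r))
                  = ∑ r : R, (fun r => (starRingEnd ℂ) (φ a (i, r)) * φ b (i, r))
                      (flipE (d := d) (fun j => x a (i j)) r) := by
                    refine Finset.sum_congr rfl fun r _ => ?_
                    rw [hsigeq r, sig_eq_flip]
                _ = ∑ r : R, (starRingEnd ℂ) (φ a (i, r)) * φ b (i, r) :=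
                    Fintype.sum_equiv (flipE (d := d) (fun j => x a (i j))) _ _ (fun r => rfl)
            rw [hu', hv', hBA, hZ]
            push_cast
            ring
  rw [hsplit]
  -- step 2: bound each summand
  have hWnn : ∀ i : Fin p → Fin N, (0:ℝ) ≤ ∑ a, ∑ r : R, ‖u i a r‖ ^ 2 := by
    intro i; positivity
  have hterm : ∀ i : Fin p → Fin N,
      ‖(∑ a, ∑ b, ((zeroedOut x Γ i a b : ℝ) : ℂ) * ∑ r : R, (starRingEnd ℂ) (u i a r) * u i b r) -
       (∑ a, ∑ b, ((zeroedOut x Γ i a b : ℝ) : ℂ) * ∑ r : R, (starRingEnd ℂ) (v i a r) * v i b r)‖ ≤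
      2 * σ * ∑ a, ∑ r : R, ‖u i a r‖ ^ 2 := by
    intro i
    have hZ := zeroedOut_isSymm x Γ hsym i
    have h1 := gram_bound' (zeroedOut x Γ i) hZ (u i)
    have h2 := gram_bound' (zeroedOut x Γ i) hZ (v i)
    have hvu : ∑ a, ∑ r : R, ‖v i a r‖ ^ 2 = ∑ a, ∑ r : R, ‖u i a r‖ ^ 2 := by
      refine Finset.sum_congr rfl fun a _ => ?_
      have := Equiv.sum_comp (flipE (d := d) (fun j => x a (i j)))
        (fun r => ‖u i a r‖ ^ 2)
      rw [← this]
      refine Finset.sum_congr rfl fun r _ => ?_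
      rw [hu, hv]
      simp only
      rw [sig_eq_flip]
    rw [hvu] at h2
    calc ‖(∑ a, ∑ b, ((zeroedOut x Γ i a b : ℝ) : ℂ) * ∑ r : R, (starRingEnd ℂ) (u i a r) * u i b r) -
       (∑ a, ∑ b, ((zeroedOut x Γ i a b : ℝ) : ℂ) * ∑ r : R, (starRingEnd ℂ) (v i a r) * v i b r)‖
        ≤ ‖∑ a, ∑ b, ((zeroedOut x Γ i a b : ℝ) : ℂ) * ∑ r : R, (starRingEnd ℂ) (u i a r) * u i b r‖ +
          ‖∑ a, ∑ b, ((zeroedOut x Γ i a b : ℝ) : ℂ) * ∑ r : R, (starRingEnd ℂ) (v i a r) * v i b r‖ :=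
          norm_sub_le _ _
      _ ≤ specNorm (zeroedOut x Γ i) * ∑ a, ∑ r : R, ‖u i a r‖ ^ 2 +
          specNorm (zeroedOut x Γ i) * ∑ a, ∑ r : R, ‖u i a r‖ ^ 2 := add_le_add h1 h2
      _ = 2 * specNorm (zeroedOut x Γ i) * ∑ a, ∑ r : R, ‖u i a r‖ ^ 2 := by ring
      _ ≤ 2 * σ * ∑ a, ∑ r : R, ‖u i a r‖ ^ 2 := by
          have := hsup_le i
          have := hWnn i
          nlinarith
  -- step 3: the weights sum to one
  have hWsum : ∑ i : Fin p → Fin N, ∑ a, ∑ r : R, ‖u i a r‖ ^ 2 = 1 := by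
    rw [Finset.sum_comm]
    have : ∀ a : S, ∑ i : Fin p → Fin N, ∑ r : R, ‖u i a r‖ ^ 2 = δ a ^ 2 := by
      intro a
      have hn : ∀ (i : Fin p → Fin N) (r : R), ‖u i a r‖ ^ 2 = δ a ^ 2 * ‖φ a (i, r)‖ ^ 2 := by
        intro i r
        rw [hu]
        simp only
        rw [norm_mul, mul_pow, Complex.norm_real, Real.norm_eq_abs, sq_abs]
      simp_rw [hn]
      rw [show (∑ i : Fin p → Fin N, ∑ r : R, δ a ^ 2 * ‖φ a (i, r)‖ ^ 2) =
        δ a ^ 2 * ∑ i : Fin p → Fin N, ∑ r : R, ‖φ a (i, r)‖ ^ 2 from by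
          rw [Finset.mul_sum]
          exact Finset.sum_congr rfl fun i _ => (Finset.mul_sum _ _ _).symm]
      have hφa : ∑ i : Fin p → Fin N, ∑ r : R, ‖φ a (i, r)‖ ^ 2 = 1 := by
        have h1 := hφ a
        rw [EuclideanSpace.norm_eq] at h1
        have h2 : ∑ k : QIdx N p d, ‖φ a k‖ ^ 2 = 1 := by
          have hnn' : (0:ℝ) ≤ ∑ k : QIdx N p d, ‖φ a k‖ ^ 2 :=
            Finset.sum_nonneg fun k _ => by positivity
          have h3 := Real.sq_sqrt hnn'
          rw [h1] at h3
          simpa using h3.symm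
        rw [← h2, Fintype.sum_prod_type]
      rw [hφa, mul_one]
    simp_rw [this]
    exact hδ
  calc ‖∑ i : Fin p → Fin N,
        ((∑ a, ∑ b, ((zeroedOut x Γ i a b : ℝ) : ℂ) * ∑ r : R, (starRingEnd ℂ) (u i a r) * u i b r) -
         (∑ a, ∑ b, ((zeroedOut x Γ i a b : ℝ) : ℂ) * ∑ r : R, (starRingEnd ℂ) (v i a r) * v i b r))‖
      ≤ ∑ i : Fin p → Fin N,
        ‖(∑ a, ∑ b, ((zeroedOut x Γ i a b : ℝ) : ℂ) * ∑ r : R, (starRingEnd ℂ) (u i a r) * u i b r) -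
         (∑ a, ∑ b, ((zeroedOut x Γ i a b : ℝ) : ℂ) * ∑ r : R, (starRingEnd ℂ) (v i a r) * v i b r)‖ :=
        norm_sum_le _ _
    _ ≤ ∑ i : Fin p → Fin N, 2 * σ * ∑ a, ∑ r : R, ‖u i a r‖ ^ 2 :=
        Finset.sum_le_sum fun i _ => hterm i
    _ = 2 * σ * ∑ i : Fin p → Fin N, ∑ a, ∑ r : R, ‖u i a r‖ ^ 2 := by rw [← Finset.mul_sum]
    _ = 2 * σ := by rw [hWsum, mul_one]
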